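/- Let N ≥ 2 and let M_1,…,M_N be projective measurements on ℂ^d given by orthonormal bases {|u^m_i⟩}, and let |ψ⟩ be a unit vector in ℂ^d with outcome probabilities p^m_i = |⟨u^m_i|ψ⟩|². Then ∑_{m=1}^N H_∞(M_m) ≥ −log₂(h), where h = max_{i_1,…,i_N} ∏_{m=1}^N (1 + √(c(u^m_{i_m}, u^{m+1}_{i_{m+1}})))/2, with the convention u^{N+1} := u^1. -/

import Mathlib

open scoped BigOperators ComplexOrder

noncomputable section

/-- Standard inner product `⟨a|b⟩` on `ℂ^d` (conjugate-linear in the first argument). -/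
def inn {d : ℕ} (a b : Fin d → ℂ) : ℂ := ∑ k, (starRingEnd ℂ) (a k) * b k

/-- The overlap `c(a,b) = |⟨a|b⟩|²`. -/
def ov {d : ℕ} (a b : Fin d → ℂ) : ℝ := ‖inn a b‖ ^ 2

/-- `u` lists the vectors of an orthonormal basis of `ℂ^d`. -/
def IsONB {d : ℕ} (u : Fin d → Fin d → ℂ) : Prop :=
  ∀ i j, inn (u i) (u j) = if i = j then 1 else 0

/-- Shannon entropy (base 2) of a probability vector; note `Real.logb 2 0 = 0`. -/
def shannon {d : ℕ} (p : Fin d → ℝ) : ℝ := -∑ i, p i * Real.logb 2 (p i)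

/-- Outcome probabilities `p_i = ⟨u_i|ρ|u_i⟩` of a projective measurement on the state `ρ`. -/
def probM {d : ℕ} (ρ : Matrix (Fin d) (Fin d) ℂ) (v : Fin d → Fin d → ℂ) (i : Fin d) : ℝ :=
  (dotProduct (star (v i)) (ρ.mulVec (v i))).re

open Classical in
/-- Von Neumann entropy (base 2): `S(ρ) = -∑ λ_k log₂ λ_k` over the eigenvalues of `ρ`. -/
def vNEnt {ι : Type} [Fintype ι] [DecidableEq ι] (A : Matrix ι ι ℂ) : ℝ :=
  if h : A.IsHermitian then -∑ k, h.eigenvalues k * Real.logb 2 (h.eigenvalues k) else 0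

open Classical in
/-- Matrix base-2 logarithm on the support, via the spectral decomposition
(eigenvalue `0` is sent to `0` since `Real.logb 2 0 = 0`). -/
def mlog2 {ι : Type} [Fintype ι] [DecidableEq ι] (A : Matrix ι ι ℂ) : Matrix ι ι ℂ :=
  if h : A.IsHermitian then
    (h.eigenvectorUnitary : Matrix ι ι ℂ) *
      Matrix.diagonal (fun k => (Real.logb 2 (h.eigenvalues k) : ℂ)) *
      star (h.eigenvectorUnitary : Matrix ι ι ℂ)
  else 0

/-- Quantum relative entropy `S(ρ‖σ) = Tr(ρ log₂ ρ) - Tr(ρ log₂ σ)`. -/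
def relEnt {ι : Type} [Fintype ι] [DecidableEq ι] (ρ σ : Matrix ι ι ℂ) : ℝ :=
  ((ρ * mlog2 ρ).trace - (ρ * mlog2 σ).trace).re

/-- The bound `b` of Theorem 2 of the paper, for `N = n + 2` measurements (indexed `0,…,n+1`):
`b = max_{i_N} { ∑_{i_2,…,i_{N-1}} max_{i_1}[c(u^1_{i_1},u^2_{i_2})]
  ∏_{m=2}^{N-1} c(u^m_{i_m},u^{m+1}_{i_{m+1}}) }`.
Here `g : Fin n → Fin d` lists the middle indices `(i_2,…,i_{N-1})`, `jN = i_N`, and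
`Fin.snoc g jN : Fin (n+1) → Fin d` is the chain `(i_2,…,i_N)`. -/
def bBound {d n : ℕ} (u : Fin (n + 2) → Fin d → Fin d → ℂ) : ℝ :=
  ⨆ jN : Fin d, ∑ g : Fin n → Fin d,
    (⨆ i1 : Fin d, ov (u 0 i1) (u 1 ((Fin.snoc g jN : Fin (n + 1) → Fin d) 0))) *
      ∏ k : Fin n, ov (u k.succ.castSucc ((Fin.snoc g jN : Fin (n + 1) → Fin d) k.castSucc))
        (u k.succ.succ ((Fin.snoc g jN : Fin (n + 1) → Fin d) k.succ))

/-- Partial trace over system `A`: `(Tr_A X)_{j j'} = ∑_i X_{(i,j),(i,j')}`. -/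
def trA {d dB : ℕ} (X : Matrix (Fin d × Fin dB) (Fin d × Fin dB) ℂ) :
    Matrix (Fin dB) (Fin dB) ℂ :=
  Matrix.of fun j j' => ∑ i, X (i, j) (i, j')

/-- The operator `|a⟩⟨a| ⊗ I` acting on `ℂ^d ⊗ ℂ^{dB}`. -/
def projA {d : ℕ} (dB : ℕ) (a : Fin d → ℂ) : Matrix (Fin d × Fin dB) (Fin d × Fin dB) ℂ :=
  Matrix.kroneckerMap (· * ·) (Matrix.vecMulVec a (star a)) (1 : Matrix (Fin dB) (Fin dB) ℂ)

end


section Helpers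
open Matrix
variable {d : ℕ}

lemma ov_nonneg (a b : Fin d → ℂ) : 0 ≤ ov a b := sq_nonneg _

lemma inn_eq_inner (a b : Fin d → ℂ) :
    inn a b = @inner ℂ (EuclideanSpace ℂ (Fin d)) _
      ((WithLp.equiv 2 (Fin d → ℂ)).symm a) ((WithLp.equiv 2 (Fin d → ℂ)).symm b) := by
  simp [inn, PiLp.inner_apply, RCLike.inner_apply]
  exact Finset.sum_congr rfl fun _ _ => mul_comm _ _

lemma inn_cauchy (a b : Fin d → ℂ) :
    ‖inn a b‖ ^ 2 ≤ (inn a a).re * (inn b b).re := by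
  have h := norm_inner_le_norm (𝕜 := ℂ)
    ((WithLp.equiv 2 (Fin d → ℂ)).symm a) ((WithLp.equiv 2 (Fin d → ℂ)).symm b)
  have ha : (inn a a).re = ‖(WithLp.equiv 2 (Fin d → ℂ)).symm a‖ ^ 2 := by
    rw [inn_eq_inner]
    simpa using inner_self_eq_norm_sq (𝕜 := ℂ) ((WithLp.equiv 2 (Fin d → ℂ)).symm a)
  have hb : (inn b b).re = ‖(WithLp.equiv 2 (Fin d → ℂ)).symm b‖ ^ 2 := by
    rw [inn_eq_inner]
    simpa using inner_self_eq_norm_sq (𝕜 := ℂ) ((WithLp.equiv 2 (Fin d → ℂ)).symm b)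
  rw [ha, hb, ← mul_pow]
  have : ‖inn a b‖ = ‖@inner ℂ (EuclideanSpace ℂ (Fin d)) _
      ((WithLp.equiv 2 (Fin d → ℂ)).symm a) ((WithLp.equiv 2 (Fin d → ℂ)).symm b)‖ := by
    rw [inn_eq_inner]
  rw [this]
  exact pow_le_pow_left₀ (norm_nonneg _) h 2

lemma inn_add_left (a b c : Fin d → ℂ) :
    inn (fun k => a k + b k) c = inn a c + inn b c := by
  simp [inn, add_mul, Finset.sum_add_distrib]

lemma inn_add_right (a b c : Fin d → ℂ) :
    inn c (fun k => a k + b k) = inn c a + inn c b := by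
  simp [inn, mul_add, Finset.sum_add_distrib]

lemma inn_mul_left (x : ℂ) (a c : Fin d → ℂ) :
    inn (fun k => x * a k) c = (starRingEnd ℂ) x * inn a c := by
  simp [inn, Finset.mul_sum]; ring_nf

lemma inn_mul_right (x : ℂ) (a c : Fin d → ℂ) :
    inn c (fun k => x * a k) = x * inn c a := by
  simp [inn, Finset.mul_sum]; ring_nf
  simp [mul_assoc, mul_comm, mul_left_comm]

lemma inn_conj (a b : Fin d → ℂ) : inn b a = (starRingEnd ℂ) (inn a b) := by
  simp [inn, map_sum, _root_.map_mul, mul_comm]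


lemma key_two (a b ψ : Fin d → ℂ) (ha : inn a a = 1) (hb : inn b b = 1)
    (hψ : inn ψ ψ = 1) : ov a ψ + ov b ψ ≤ 1 + Real.sqrt (ov a b) := by
  set x := inn a ψ with hx
  set y := inn b ψ with hy
  set t := inn a b with ht
  have hsq : Real.sqrt (ov a b) = ‖t‖ := by
    rw [ov, Real.sqrt_sq (norm_nonneg _)]
  set v : Fin d → ℂ := fun k => x * a k + y * b k with hv
  have hvψ : inn v ψ = ((Complex.normSq x + Complex.normSq y : ℝ) : ℂ) := by
    rw [hv, inn_add_left, inn_mul_left, inn_mul_left, ← hx, ← hy]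
    push_cast
    rw [Complex.normSq_eq_conj_mul_self, Complex.normSq_eq_conj_mul_self]
  have hvv : inn v v = ((Complex.normSq x + Complex.normSq y : ℝ) : ℂ)
      + ((starRingEnd ℂ) x * y * t + (starRingEnd ℂ) ((starRingEnd ℂ) x * y * t)) := by
    simp only [hv, inn_add_left, inn_mul_left, inn_add_right, inn_mul_right, ha, hb,
      mul_one, inn_conj a b, ← ht, _root_.map_mul, Complex.conj_conj]
    push_cast
    rw [Complex.normSq_eq_conj_mul_self, Complex.normSq_eq_conj_mul_self]
    ring
  set s : ℝ := Complex.normSq x + Complex.normSq y with hsdef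
  have hs0 : 0 ≤ s := add_nonneg (Complex.normSq_nonneg x) (Complex.normSq_nonneg y)
  have hcs := inn_cauchy v ψ
  rw [hψ] at hcs
  simp only [Complex.one_re, mul_one] at hcs
  rw [hvψ] at hcs
  rw [Complex.norm_of_nonneg hs0] at hcs
  have hre : (inn v v).re = s + 2 * ((starRingEnd ℂ) x * y * t).re := by
    rw [hvv]
    simp [Complex.add_re, Complex.conj_re]
    ring
  rw [hre] at hcs
  -- bound the cross term
  have hcross : ((starRingEnd ℂ) x * y * t).re ≤
      ‖x‖ * ‖y‖ * ‖t‖ := by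
    calc ((starRingEnd ℂ) x * y * t).re ≤ ‖(starRingEnd ℂ) x * y * t‖ :=
        Complex.re_le_norm _
      _ = ‖x‖ * ‖y‖ * ‖t‖ := by
        simp [_root_.map_mul]
  have hT : 0 ≤ ‖t‖ := norm_nonneg _
  have hXY : 2 * (‖x‖ * ‖y‖) ≤ s := by
    have := sq_nonneg (‖x‖ - ‖y‖)
    rw [hsdef, ← Complex.sq_norm, ← Complex.sq_norm]
    nlinarith
  have hmain : s ^ 2 ≤ s * (1 + ‖t‖) := by
    nlinarith [mul_le_mul_of_nonneg_right hXY hT]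
  have hgoal : s ≤ 1 + ‖t‖ := by
    rcases eq_or_lt_of_le hs0 with h0 | h0
    · rw [← h0]; positivity
    · nlinarith
  rw [hsq]
  have : ov a ψ + ov b ψ = s := by
    rw [ov, ov, hsdef, Complex.sq_norm, Complex.sq_norm, ← hx, ← hy]
  rw [this]
  exact hgoal

lemma parseval {u : Fin d → Fin d → ℂ} (hu : IsONB u) {ψ : Fin d → ℂ}
    (hψ : inn ψ ψ = 1) : ∑ i, ov (u i) ψ = 1 := by
  classical
  set M : Matrix (Fin d) (Fin d) ℂ := Matrix.of fun i k => (starRingEnd ℂ) (u i k) with hM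
  have h1 : M * Mᴴ = 1 := by
    ext i j
    have := hu i j
    simp only [Matrix.mul_apply, Matrix.conjTranspose_apply, hM, Matrix.of_apply,
      Matrix.one_apply, Complex.star_def, Complex.conj_conj]
    simpa [inn] using this
  have h2 : Mᴴ * M = 1 := mul_eq_one_comm.mp h1
  have hw : ∀ i, inn (u i) ψ = M.mulVec ψ i := by
    intro i; simp [inn, Matrix.mulVec, dotProduct, hM]
  have key : (∑ i, ((starRingEnd ℂ) (M.mulVec ψ i) * (M.mulVec ψ i))) = 1 := by
    have : (∑ i, ((starRingEnd ℂ) (M.mulVec ψ i) * (M.mulVec ψ i)))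
        = dotProduct (star (M.mulVec ψ)) (M.mulVec ψ) := by
      simp [dotProduct, Complex.star_def]
    rw [this, Matrix.star_mulVec, dotProduct_mulVec, Matrix.vecMul_vecMul, h2, Matrix.vecMul_one]
    simpa [Matrix.vecMul, dotProduct, inn, Complex.star_def] using hψ
  have : (∑ i, ov (u i) ψ : ℂ) = 1 := by
    push_cast
    rw [← key]
    congr 1
    ext i
    rw [ov, Complex.sq_norm, hw, Complex.normSq_eq_conj_mul_self]
  exact_mod_cast this

lemma sup_pos (hd : 0 < d) {u : Fin d → Fin d → ℂ} (hu : IsONB u) {ψ : Fin d → ℂ}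
    (hψ : inn ψ ψ = 1) : 0 < ⨆ i : Fin d, ov (u i) ψ := by
  have : Nonempty (Fin d) := ⟨⟨0, hd⟩⟩
  set s := ⨆ i : Fin d, ov (u i) ψ with hs
  have hb : BddAbove (Set.range fun i : Fin d => ov (u i) ψ) :=
    (Set.finite_range _).bddAbove
  have h1 : (1 : ℝ) ≤ (d : ℝ) * s := by
    have := Finset.sum_le_card_nsmul Finset.univ (fun i => ov (u i) ψ) s
      (fun i _ => le_ciSup hb i)
    rw [parseval hu hψ] at this
    simpa [nsmul_eq_mul] using this
  nlinarith [(by exact_mod_cast hd : (0:ℝ) < (d:ℝ))]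

end Helpers

/-- Theorem 1 of the paper: for `N = n + 2 ≥ 2` projective measurements on a
pure state `ψ`, `∑_m H_∞(M_m) ≥ -log₂ h` with
`h = max_{i_1,…,i_N} ∏_m (1 + √(c(u^m_{i_m},u^{m+1}_{i_{m+1}})))/2`, superscripts mod `N`. -/
theorem min_entropy_uncertainty {d n : ℕ} (hd : 0 < d) (u : Fin (n + 2) → Fin d → Fin d → ℂ)
    (hu : ∀ m, IsONB (u m)) (ψ : Fin d → ℂ) (hψ : inn ψ ψ = 1) :
    ∑ m : Fin (n + 2), -Real.logb 2 (⨆ i : Fin d, ov (u m i) ψ) ≥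
      -Real.logb 2 (⨆ i : Fin (n + 2) → Fin d,
        ∏ m : Fin (n + 2), (1 + Real.sqrt (ov (u m (i m)) (u (m + 1) (i (m + 1))))) / 2) := by
  have hne : Nonempty (Fin d) := ⟨⟨0, hd⟩⟩
  set s : Fin (n + 2) → ℝ := fun m => ⨆ i : Fin d, ov (u m i) ψ with hsdef
  have hspos : ∀ m, 0 < s m := fun m => sup_pos hd (hu m) hψ
  -- maximizers
  have hex : ∀ m : Fin (n + 2), ∃ i : Fin d, ov (u m i) ψ = s m := fun m =>
    exists_eq_ciSup_of_finite
  choose iStar hiStar using hex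
  set F : (Fin (n + 2) → Fin d) → ℝ := fun i =>
    ∏ m : Fin (n + 2), (1 + Real.sqrt (ov (u m (i m)) (u (m + 1) (i (m + 1))))) / 2 with hFdef
  set h : ℝ := ⨆ i : Fin (n + 2) → Fin d, F i with hhdef
  have hFnn : ∀ i, 0 ≤ F i := fun i =>
    Finset.prod_nonneg fun m _ => by positivity
  -- unit vectors
  have hunit : ∀ (m : Fin (n + 2)) (i : Fin d), inn (u m i) (u m i) = 1 := by
    intro m i; simpa using hu m i i
  -- pointwise bound
  have hpoint : ∀ m : Fin (n + 2),
      s m * s (m + 1) ≤ ((1 + Real.sqrt (ov (u m (iStar m)) (u (m + 1) (iStar (m + 1))))) / 2) ^ 2 := by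
    intro m
    have hk := key_two (u m (iStar m)) (u (m + 1) (iStar (m + 1))) ψ
      (hunit m (iStar m)) (hunit (m + 1) (iStar (m + 1))) hψ
    rw [hiStar m, hiStar (m + 1)] at hk
    have h1 : 0 ≤ s m := (hspos m).le
    have h2 : 0 ≤ s (m + 1) := (hspos (m + 1)).le
    nlinarith [sq_nonneg (s m - s (m + 1))]
  -- cyclic reindex
  have hre : ∏ m : Fin (n + 2), s (m + 1) = ∏ m : Fin (n + 2), s m :=
    Fintype.prod_equiv (Equiv.addRight 1) _ _ (fun m => by simp)
  have hP2 : (∏ m : Fin (n + 2), s m) ^ 2 ≤ (F iStar) ^ 2 := by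
    calc (∏ m : Fin (n + 2), s m) ^ 2
        = ∏ m : Fin (n + 2), (s m * s (m + 1)) := by
          rw [Finset.prod_mul_distrib, hre, sq]
      _ ≤ ∏ m : Fin (n + 2),
            ((1 + Real.sqrt (ov (u m (iStar m)) (u (m + 1) (iStar (m + 1))))) / 2) ^ 2 :=
          Finset.prod_le_prod (fun m _ => mul_nonneg (hspos m).le (hspos (m + 1)).le)
            (fun m _ => hpoint m)
      _ = (F iStar) ^ 2 := by rw [hFdef, ← Finset.prod_pow]
  have hPnn : 0 ≤ ∏ m : Fin (n + 2), s m := Finset.prod_nonneg fun m _ => (hspos m).le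
  have hPF : ∏ m : Fin (n + 2), s m ≤ F iStar := by
    have := Real.sqrt_le_sqrt hP2
    rwa [Real.sqrt_sq hPnn, Real.sqrt_sq (hFnn iStar)] at this
  have hFh : F iStar ≤ h := le_ciSup ((Set.finite_range F).bddAbove) iStar
  have hPh : ∏ m : Fin (n + 2), s m ≤ h := hPF.trans hFh
  have hPpos : 0 < ∏ m : Fin (n + 2), s m := Finset.prod_pos fun m _ => hspos m
  have hhpos : 0 < h := lt_of_lt_of_le hPpos hPh
  have hsum : ∑ m : Fin (n + 2), -Real.logb 2 (s m)
      = -Real.logb 2 (∏ m : Fin (n + 2), s m) := by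
    rw [Real.logb_prod _ _ (fun m _ => (hspos m).ne'), Finset.sum_neg_distrib]
  calc ∑ m : Fin (n + 2), -Real.logb 2 (s m)
      = -Real.logb 2 (∏ m : Fin (n + 2), s m) := hsum
    _ ≥ -Real.logb 2 h := by
        have := (Real.logb_le_logb one_lt_two hPpos hhpos).mpr hPh
        linarith
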